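/- There exist constants c ∈ ℝ and C > 0 such that for all α ∈ (−a, a) and all sufficiently small ε > 0: (i) g_l(α, p̂) = 0 for every p̂ < c; and (ii) |g_l(α, p̂)| ≤ C p̂^{−1/2} for every p̂ ≥ 1. The constants c and C are uniform with respect to α ∈ (−a, a) and ε > 0 sufficiently small. -/

import Mathlib

open MeasureTheory

set_option maxHeartbeats 2000000 in
/-- support and decay of the leading data term
`g_l(α,p̂) = D R₀ ∫_ℝ ∫₀^{H₀(α̃+ν)} w(p̂ − (R₀/2)ν² − t) dt dν`:
there exist `c` and `C > 0`, uniform in `α ∈ (−a,a)` and sufficiently small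
`ε > 0`, such that `g_l(α,p̂) = 0` for `p̂ < c` and `|g_l(α,p̂)| ≤ C p̂^{−1/2}`
for `p̂ ≥ 1`.  (Here `H₀(s) = ε⁻¹ H_ε(ε^{1/2} s)`, so that
`H₀(α/ε^{1/2} + ν) = ε⁻¹ H_ε(α + ε^{1/2} ν)`, and the inner integral is signed.) -/
theorem stmt_2 (γ a c₀ ε₀ D R₀ : ℝ) (w : ℝ → ℝ) (H : ℝ → ℝ → ℝ)
    (hγ : γ ∈ Set.Ioc (0:ℝ) 1) (ha : 0 < a) (hc₀ : 0 < c₀) (hε₀ : 0 < ε₀)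
    (hR₀ : 0 < R₀)
    -- the detector aperture function w ∈ C₀²(ℝ), even, with ∫ w = 1
    (hw_even : ∀ p : ℝ, w (-p) = w p)
    (hw_supp : HasCompactSupport w)
    (hw_d1 : ∀ p : ℝ, DifferentiableAt ℝ w p)
    (hw_d2 : ∀ p : ℝ, DifferentiableAt ℝ (deriv w) p)
    (hw_bdd : ∃ M : ℝ, ∀ᵐ p : ℝ, |deriv (deriv w) p| ≤ M)
    (hw_int : ∫ p : ℝ, w p = 1)
    -- the perturbation family: H1 and H2
    (hH1 : ∀ ε ∈ Set.Ioo (0:ℝ) ε₀, ∀ s : ℝ, |H ε s| ≤ c₀ * ε)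
    (hH2 : ∀ ε ∈ Set.Ioo (0:ℝ) ε₀, ∀ s h : ℝ, 0 < h →
      |H ε (s + Real.sqrt ε * h) - H ε s| ≤ c₀ * ε * h ^ γ)
    -- the leading term g_l
    (gl : ℝ → ℝ → ℝ → ℝ)
    (hgl : ∀ ε α p : ℝ, gl ε α p = D * R₀ *
      ∫ ν : ℝ, ∫ t in (0:ℝ)..(ε⁻¹ * H ε (α + Real.sqrt ε * ν)),
        w (p - R₀ / 2 * ν ^ 2 - t)) :
    ∃ c C : ℝ, 0 < C ∧ ∃ ε₁ : ℝ, 0 < ε₁ ∧ ε₁ ≤ ε₀ ∧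
      ∀ ε ∈ Set.Ioo (0:ℝ) ε₁, ∀ α ∈ Set.Ioo (-a) a,
        (∀ p : ℝ, p < c → gl ε α p = 0) ∧
        (∀ p : ℝ, 1 ≤ p → |gl ε α p| ≤ C * p ^ (-(1:ℝ)/2)) := by
  -- a bound on w
  have hw_cont : Continuous w := by
    rw [continuous_iff_continuousAt]; exact fun x => (hw_d1 x).continuousAt
  obtain ⟨M₀, hM₀⟩ := hw_cont.bounded_above_of_compact_support hw_supp
  have hM₀0 : 0 ≤ M₀ := le_trans (norm_nonneg _) (hM₀ 0)
  -- the support of w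
  obtain ⟨L, hL⟩ := hw_supp.isBounded.subset_closedBall 0
  set L₀ : ℝ := max L 0 with hL₀def
  have hL₀0 : 0 ≤ L₀ := le_max_right _ _
  have hzero : ∀ x : ℝ, L₀ < |x| → w x = 0 := by
    intro x hx
    apply image_eq_zero_of_notMem_tsupport
    intro hmem
    have h1 := hL hmem
    rw [Metric.mem_closedBall, Real.dist_eq, sub_zero] at h1
    have h2 : L ≤ L₀ := le_max_left _ _
    linarith
  -- constants
  set K : ℝ := L₀ + c₀ with hKdef
  have hK : 0 < K := by positivity
  set C₂ : ℝ := Real.sqrt (4 * K ^ 2 / R₀) + 4 * K / R₀ * Real.sqrt (R₀ / 2) with hC₂def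
  have hC₂ : 0 ≤ C₂ := by positivity
  refine ⟨-K, |D * R₀| * (2 * (c₀ * M₀)) * C₂ + 1, ?_, ε₀, hε₀, le_refl _, ?_⟩
  · have h1 : 0 ≤ |D * R₀| * (2 * (c₀ * M₀)) * C₂ := by
      apply mul_nonneg (mul_nonneg (abs_nonneg _) (by nlinarith)) hC₂
    linarith
  intro ε hε α hα
  have hεpos : 0 < ε := hε.1
  have hb : ∀ ν : ℝ, |ε⁻¹ * H ε (α + Real.sqrt ε * ν)| ≤ c₀ := by
    intro ν
    rw [abs_mul, abs_of_pos (inv_pos.mpr hεpos)]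
    have h1 := hH1 ε hε (α + Real.sqrt ε * ν)
    calc ε⁻¹ * |H ε (α + Real.sqrt ε * ν)| ≤ ε⁻¹ * (c₀ * ε) := by
          apply mul_le_mul_of_nonneg_left h1 (inv_pos.mpr hεpos).le
      _ = c₀ := by field_simp
  constructor
  · -- support property
    intro p hp
    rw [hgl]
    have h0 : ∀ ν : ℝ, (∫ t in (0:ℝ)..(ε⁻¹ * H ε (α + Real.sqrt ε * ν)),
        w (p - R₀ / 2 * ν ^ 2 - t)) = 0 := by
      intro ν
      set b : ℝ := ε⁻¹ * H ε (α + Real.sqrt ε * ν) with hbdef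
      have hbb := abs_le.mp (hb ν)
      have heq : Set.EqOn (fun t => w (p - R₀ / 2 * ν ^ 2 - t)) (fun _ => (0:ℝ))
          (Set.uIcc 0 b) := by
        intro t ht
        have htt : -c₀ ≤ t ∧ t ≤ c₀ := by
          rcases Set.mem_uIcc.mp ht with ⟨h1, h2⟩ | ⟨h1, h2⟩ <;> constructor <;> linarith
        have hν : 0 ≤ R₀ / 2 * ν ^ 2 := by positivity
        have harg : p - R₀ / 2 * ν ^ 2 - t < -L₀ := by
          have : p < -(L₀ + c₀) := hp
          linarith [htt.1]
        show w (p - R₀ / 2 * ν ^ 2 - t) = 0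
        apply hzero
        have hneg : p - R₀ / 2 * ν ^ 2 - t < 0 := by linarith
        rw [abs_of_neg hneg]; linarith
      rw [intervalIntegral.integral_congr heq]
      simp
    simp only [h0, integral_zero, mul_zero]
  · -- decay property
    intro p hp
    have hp0 : (0:ℝ) < p := lt_of_lt_of_le one_pos hp
    set r₁ : ℝ := Real.sqrt (2 * (p - K) / R₀) with hr₁def
    set r₂ : ℝ := Real.sqrt (2 * (p + K) / R₀) with hr₂def
    have hr₁0 : 0 ≤ r₁ := Real.sqrt_nonneg _
    have hr₂0 : 0 ≤ r₂ := Real.sqrt_nonneg _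
    have hr12 : r₁ ≤ r₂ :=
      Real.sqrt_le_sqrt ((div_le_div_iff_of_pos_right hR₀).mpr (by linarith))
    set F : ℝ → ℝ := fun ν => ∫ t in (0:ℝ)..(ε⁻¹ * H ε (α + Real.sqrt ε * ν)),
        w (p - R₀ / 2 * ν ^ 2 - t) with hFdef
    -- F vanishes outside the annulus
    have hF0 : ∀ ν : ℝ, ν ∉ Set.Icc (-r₂) (-r₁) → ν ∉ Set.Icc r₁ r₂ → F ν = 0 := by
      intro ν hn1 hn2
      have habs : |ν| < r₁ ∨ r₂ < |ν| := by
        by_contra hcon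
        push_neg at hcon
        obtain ⟨h1, h2⟩ := hcon
        rcases le_or_gt 0 ν with hν0 | hν0
        · exact hn2 ⟨by rwa [abs_of_nonneg hν0] at h1, by rwa [abs_of_nonneg hν0] at h2⟩
        · rw [abs_of_neg hν0] at h1 h2
          exact hn1 ⟨by linarith, by linarith⟩
      have hbb := abs_le.mp (hb ν)
      set b : ℝ := ε⁻¹ * H ε (α + Real.sqrt ε * ν) with hbdef
      have heq : Set.EqOn (fun t => w (p - R₀ / 2 * ν ^ 2 - t)) (fun _ => (0:ℝ))
          (Set.uIcc 0 b) := by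
        intro t ht
        have htt : -c₀ ≤ t ∧ t ≤ c₀ := by
          rcases Set.mem_uIcc.mp ht with ⟨h1, h2⟩ | ⟨h1, h2⟩ <;> constructor <;> linarith
        show w (p - R₀ / 2 * ν ^ 2 - t) = 0
        apply hzero
        rcases habs with hlt | hlt
        · -- |ν| < r₁, so the argument is large positive
          have hsq : |ν| ^ 2 < 2 * (p - K) / R₀ := (Real.lt_sqrt (abs_nonneg ν)).mp hlt
          rw [sq_abs] at hsq
          have hν2 : R₀ / 2 * ν ^ 2 < p - K := by
            have heq : p - K = R₀ / 2 * (2 * (p - K) / R₀) := by field_simp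
            rw [heq]
            exact mul_lt_mul_of_pos_left hsq (by linarith)
          have harg : L₀ < p - R₀ / 2 * ν ^ 2 - t := by
            have : K = L₀ + c₀ := hKdef
            linarith [htt.2]
          rw [abs_of_pos (by linarith)]
          exact harg
        · -- r₂ < |ν|, so the argument is large negative
          have hνpos : 0 < |ν| := lt_of_le_of_lt hr₂0 hlt
          have hsq : 2 * (p + K) / R₀ < |ν| ^ 2 := (Real.sqrt_lt' hνpos).mp hlt
          rw [sq_abs] at hsq
          have hν2 : p + K < R₀ / 2 * ν ^ 2 := by
            have heq : p + K = R₀ / 2 * (2 * (p + K) / R₀) := by field_simp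
            rw [heq]
            exact mul_lt_mul_of_pos_left hsq (by linarith)
          have harg : p - R₀ / 2 * ν ^ 2 - t < -L₀ := by
            have : K = L₀ + c₀ := hKdef
            linarith [htt.1]
          rw [abs_of_neg (by linarith)]
          linarith
      show (∫ t in (0:ℝ)..b, w (p - R₀ / 2 * ν ^ 2 - t)) = 0
      rw [intervalIntegral.integral_congr heq]
      simp
    -- pointwise bound on F
    have hFb : ∀ ν : ℝ, |F ν| ≤ c₀ * M₀ := by
      intro ν
      have h1 : ∀ x ∈ Set.uIoc (0:ℝ) (ε⁻¹ * H ε (α + Real.sqrt ε * ν)),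
          ‖w (p - R₀ / 2 * ν ^ 2 - x)‖ ≤ M₀ := fun x _ => hM₀ _
      have h2 := intervalIntegral.norm_integral_le_of_norm_le_const h1
      rw [Real.norm_eq_abs] at h2
      calc |F ν| ≤ M₀ * |ε⁻¹ * H ε (α + Real.sqrt ε * ν) - 0| := h2
        _ = M₀ * |ε⁻¹ * H ε (α + Real.sqrt ε * ν)| := by rw [sub_zero]
        _ ≤ M₀ * c₀ := mul_le_mul_of_nonneg_left (hb ν) hM₀0
        _ = c₀ * M₀ := mul_comm _ _
    -- the dominating function
    set g : ℝ → ℝ := fun ν => (Set.Icc (-r₂) (-r₁)).indicator (fun _ => c₀ * M₀) ν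
        + (Set.Icc r₁ r₂).indicator (fun _ => c₀ * M₀) ν with hgdef
    have hcM : 0 ≤ c₀ * M₀ := mul_nonneg hc₀.le hM₀0
    have hind_nonneg : ∀ (s : Set ℝ) (ν : ℝ), 0 ≤ s.indicator (fun _ => c₀ * M₀) ν :=
      fun s ν => Set.indicator_nonneg (fun _ _ => hcM) ν
    have hle : ∀ ν : ℝ, |F ν| ≤ g ν := by
      intro ν
      by_cases h1 : ν ∈ Set.Icc (-r₂) (-r₁)
      · calc |F ν| ≤ c₀ * M₀ := hFb ν
          _ ≤ g ν := by
            rw [hgdef]; simp only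
            rw [Set.indicator_of_mem h1]
            linarith [hind_nonneg (Set.Icc r₁ r₂) ν]
      · by_cases h2 : ν ∈ Set.Icc r₁ r₂
        · calc |F ν| ≤ c₀ * M₀ := hFb ν
            _ ≤ g ν := by
              rw [hgdef]; simp only
              rw [Set.indicator_of_mem h2]
              linarith [hind_nonneg (Set.Icc (-r₂) (-r₁)) ν]
        · rw [hF0 ν h1 h2]
          simp only [abs_zero]
          exact le_trans (le_refl 0) (add_nonneg (hind_nonneg _ _) (hind_nonneg _ _))
    -- integrability and integral of g
    have hint1 : Integrable ((Set.Icc (-r₂) (-r₁)).indicator (fun _ => c₀ * M₀)) :=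
      (integrable_indicator_iff measurableSet_Icc).2
        (integrableOn_const measure_Icc_lt_top.ne)
    have hint2 : Integrable ((Set.Icc r₁ r₂).indicator (fun _ => c₀ * M₀)) :=
      (integrable_indicator_iff measurableSet_Icc).2
        (integrableOn_const measure_Icc_lt_top.ne)
    have hgint : Integrable g := hint1.add hint2
    have hval1 : (∫ ν : ℝ, (Set.Icc (-r₂) (-r₁)).indicator (fun _ => c₀ * M₀) ν)
        = (r₂ - r₁) * (c₀ * M₀) := by
      rw [integral_indicator_const _ measurableSet_Icc, Real.volume_real_Icc_of_le (by linarith), smul_eq_mul]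
      ring
    have hval2 : (∫ ν : ℝ, (Set.Icc r₁ r₂).indicator (fun _ => c₀ * M₀) ν)
        = (r₂ - r₁) * (c₀ * M₀) := by
      rw [integral_indicator_const _ measurableSet_Icc, Real.volume_real_Icc_of_le (by linarith), smul_eq_mul]
    have hIb : |∫ ν : ℝ, F ν| ≤ (r₂ - r₁) * (c₀ * M₀) + (r₂ - r₁) * (c₀ * M₀) := by
      by_cases hFi : Integrable F
      · calc |∫ ν : ℝ, F ν| ≤ ∫ ν : ℝ, |F ν| := by
              simpa [Real.norm_eq_abs] using norm_integral_le_integral_norm F (μ := volume)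
          _ ≤ ∫ ν : ℝ, g ν := integral_mono hFi.abs hgint hle
          _ = (r₂ - r₁) * (c₀ * M₀) + (r₂ - r₁) * (c₀ * M₀) := by
              rw [hgdef]
              rw [integral_add hint1 hint2, hval1, hval2]
      · rw [integral_undef hFi, abs_zero]
        have : 0 ≤ (r₂ - r₁) * (c₀ * M₀) := mul_nonneg (by linarith) hcM
        linarith
    -- the decay estimate on r₂ - r₁
    have hmain : Real.sqrt p * (r₂ - r₁) ≤ C₂ := by
      rcases le_or_gt p K with hpK | hpK
      · -- p ≤ K : r₁ = 0 and r₂ is bounded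
        have hr₁z : r₁ = 0 := Real.sqrt_eq_zero_of_nonpos (by
          apply div_nonpos_of_nonpos_of_nonneg (by linarith) hR₀.le)
        have h1 : Real.sqrt p * r₂ = Real.sqrt (p * (2 * (p + K) / R₀)) :=
          (Real.sqrt_mul hp0.le _).symm
        have h2 : p * (2 * (p + K) / R₀) ≤ 4 * K ^ 2 / R₀ := by
          rw [← mul_div_assoc]
          exact (div_le_div_iff_of_pos_right hR₀).mpr (by nlinarith)
        calc Real.sqrt p * (r₂ - r₁) = Real.sqrt p * r₂ := by rw [hr₁z, sub_zero]
          _ = Real.sqrt (p * (2 * (p + K) / R₀)) := h1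
          _ ≤ Real.sqrt (4 * K ^ 2 / R₀) := Real.sqrt_le_sqrt h2
          _ ≤ C₂ := by
              rw [hC₂def]
              have : 0 ≤ 4 * K / R₀ * Real.sqrt (R₀ / 2) := by positivity
              linarith
      · -- K < p
        have h1 : 0 ≤ 2 * (p - K) / R₀ := div_nonneg (by linarith) hR₀.le
        have h2 : 0 < 2 * (p + K) / R₀ := div_pos (by linarith) hR₀
        have hr₁sq : r₁ ^ 2 = 2 * (p - K) / R₀ := Real.sq_sqrt h1
        have hr₂sq : r₂ ^ 2 = 2 * (p + K) / R₀ := Real.sq_sqrt h2.le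
        have hr₂pos : 0 < r₂ := Real.sqrt_pos.mpr h2
        have hdiff : r₂ ^ 2 - r₁ ^ 2 = 4 * K / R₀ := by
          rw [hr₁sq, hr₂sq]; field_simp; ring
        have h5 : r₁ ^ 2 ≤ r₁ * r₂ := by
          rw [sq]; exact mul_le_mul_of_nonneg_left hr12 hr₁0
        have hkey : r₂ - r₁ ≤ 4 * K / R₀ / r₂ := by
          rw [le_div_iff₀ hr₂pos]
          calc (r₂ - r₁) * r₂ = r₂ ^ 2 - r₁ * r₂ := by ring
            _ ≤ r₂ ^ 2 - r₁ ^ 2 := by linarith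
            _ = 4 * K / R₀ := hdiff
        have hsp : Real.sqrt p ≤ Real.sqrt (R₀ / 2) * r₂ := by
          rw [← Real.sqrt_mul (by positivity : (0:ℝ) ≤ R₀ / 2)]
          apply Real.sqrt_le_sqrt
          have heq : R₀ / 2 * (2 * (p + K) / R₀) = p + K := by field_simp
          rw [heq]; linarith
        have h4K : 0 ≤ 4 * K / R₀ / r₂ := by positivity
        calc Real.sqrt p * (r₂ - r₁)
            ≤ (Real.sqrt (R₀ / 2) * r₂) * (4 * K / R₀ / r₂) := by
              apply mul_le_mul hsp hkey (by linarith) (by positivity)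
          _ = 4 * K / R₀ * Real.sqrt (R₀ / 2) := by field_simp
          _ ≤ C₂ := by
              rw [hC₂def]
              have : 0 ≤ Real.sqrt (4 * K ^ 2 / R₀) := Real.sqrt_nonneg _
              linarith
    have hsqp : 0 < Real.sqrt p := Real.sqrt_pos.mpr hp0
    have hrw : p ^ (-(1:ℝ)/2) = (Real.sqrt p)⁻¹ := by
      rw [show (-(1:ℝ)/2) = -(1/2 : ℝ) by norm_num, Real.rpow_neg hp0.le,
        ← Real.sqrt_eq_rpow]
    have hrp : r₂ - r₁ ≤ C₂ * p ^ (-(1:ℝ)/2) := by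
      rw [hrw]
      have h1 : r₂ - r₁ ≤ C₂ / Real.sqrt p := by
        rw [le_div_iff₀ hsqp, mul_comm]; exact hmain
      calc r₂ - r₁ ≤ C₂ / Real.sqrt p := h1
        _ = C₂ * (Real.sqrt p)⁻¹ := div_eq_mul_inv _ _
    have hrpow_nonneg : 0 ≤ p ^ (-(1:ℝ)/2) := by
      rw [hrw]; positivity
    -- assemble
    rw [hgl]
    have hFeq : (∫ ν : ℝ, ∫ t in (0:ℝ)..(ε⁻¹ * H ε (α + Real.sqrt ε * ν)),
        w (p - R₀ / 2 * ν ^ 2 - t)) = ∫ ν : ℝ, F ν := rfl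
    rw [hFeq, abs_mul]
    clear_value K C₂ r₁ r₂ F g
    have s1 : |D * R₀| * |∫ ν : ℝ, F ν|
        ≤ |D * R₀| * ((r₂ - r₁) * (c₀ * M₀) + (r₂ - r₁) * (c₀ * M₀)) :=
      mul_le_mul_of_nonneg_left hIb (abs_nonneg _)
    have s2 : |D * R₀| * ((r₂ - r₁) * (c₀ * M₀) + (r₂ - r₁) * (c₀ * M₀))
        = |D * R₀| * (2 * (c₀ * M₀)) * (r₂ - r₁) := by ring
    have s3 : |D * R₀| * (2 * (c₀ * M₀)) * (r₂ - r₁)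
        ≤ |D * R₀| * (2 * (c₀ * M₀)) * (C₂ * p ^ (-(1:ℝ)/2)) := by
      apply mul_le_mul_of_nonneg_left hrp
      exact mul_nonneg (abs_nonneg _) (by linarith)
    have s4 : |D * R₀| * (2 * (c₀ * M₀)) * (C₂ * p ^ (-(1:ℝ)/2))
        = (|D * R₀| * (2 * (c₀ * M₀)) * C₂) * p ^ (-(1:ℝ)/2) := by ring
    have s5 : (|D * R₀| * (2 * (c₀ * M₀)) * C₂) * p ^ (-(1:ℝ)/2)
        ≤ (|D * R₀| * (2 * (c₀ * M₀)) * C₂ + 1) * p ^ (-(1:ℝ)/2) :=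
      mul_le_mul_of_nonneg_right (by linarith) hrpow_nonneg
    linarith
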